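/- Let (X,Y) have a differentiable joint density on ℝ² with finite J_XX, J_YY, J_XY, and let W = X+Y have a differentiable density with finite Fisher information J(X+Y). Then for every pair of real numbers a, b: (a+b)² J(X+Y) ≤ a² J_XX + 2ab J_XY + b² J_YY; this follows because E[(a ρ⁽¹⁾(X,Y) + b ρ⁽²⁾(X,Y) − (a+b) ρ_W(X+Y))²] = a² J_XX + 2ab J_XY + b² J_YY − (a+b)² J(X+Y) ≥ 0. -/

import Mathlib

open MeasureTheory Real

/-- `ρ⁽¹⁾(x,y) = (∂p/∂x)(x,y) / p(x,y)`. -/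
noncomputable def score1 (p : ℝ × ℝ → ℝ) (z : ℝ × ℝ) : ℝ :=
  deriv (fun x => p (x, z.2)) z.1 / p z

/-- `ρ⁽²⁾(x,y) = (∂p/∂y)(x,y) / p(x,y)`. -/
noncomputable def score2 (p : ℝ × ℝ → ℝ) (z : ℝ × ℝ) : ℝ :=
  deriv (fun y => p (z.1, y)) z.2 / p z

/-- `J_XX = E[ρ⁽¹⁾(X,Y)²]`. -/
noncomputable def Jxx (p : ℝ × ℝ → ℝ) : ℝ := ∫ z, p z * (score1 p z) ^ 2

/-- `J_YY = E[ρ⁽²⁾(X,Y)²]`. -/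
noncomputable def Jyy (p : ℝ × ℝ → ℝ) : ℝ := ∫ z, p z * (score2 p z) ^ 2

/-- `J_XY = E[ρ⁽¹⁾(X,Y) ρ⁽²⁾(X,Y)]`. -/
noncomputable def Jxy (p : ℝ × ℝ → ℝ) : ℝ := ∫ z, p z * (score1 p z * score2 p z)

/-- Density of `W = X + Y`: `p_W(w) = ∫ p(x, w-x) dx`. -/
noncomputable def sumDensity (p : ℝ × ℝ → ℝ) (w : ℝ) : ℝ := ∫ x, p (x, w - x)

/-- Score of the sum: `ρ_W = p_W'/p_W`. -/
noncomputable def scoreW (p : ℝ × ℝ → ℝ) (w : ℝ) : ℝ :=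
  deriv (sumDensity p) w / sumDensity p w

/-- `J(X+Y) = E[ρ_W(W)²]`. -/
noncomputable def Jsum (p : ℝ × ℝ → ℝ) : ℝ := ∫ w, sumDensity p w * (scoreW p w) ^ 2

/-- `p` is a joint probability density on `ℝ²`. -/
def IsJointDensity (p : ℝ × ℝ → ℝ) : Prop :=
  Measurable p ∧ (∀ z, 0 ≤ p z) ∧ (∫ z, p z) = 1

section Aux

open Set Filter Topology

/-- partial derivative in the first variable -/
noncomputable def D1 (p : ℝ × ℝ → ℝ) (z : ℝ × ℝ) : ℝ := deriv (fun x => p (x, z.2)) z.1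

/-- partial derivative in the second variable -/
noncomputable def D2 (p : ℝ × ℝ → ℝ) (z : ℝ × ℝ) : ℝ := deriv (fun y => p (z.1, y)) z.2

lemma measurable_D2 (p : ℝ × ℝ → ℝ) (hm : Measurable p)
    (hd2 : ∀ x, Differentiable ℝ (fun y => p (x, y))) : Measurable (D2 p) := by
  have key : ∀ z : ℝ × ℝ, Tendsto (fun n : ℕ => (p (z.1, z.2 + ((n : ℝ) + 1)⁻¹) - p z) * ((n : ℝ) + 1))
      atTop (𝓝 (D2 p z)) := by
    intro z
    have h := ((hd2 z.1) z.2).hasDerivAt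
    rw [hasDerivAt_iff_tendsto_slope] at h
    have hu : Tendsto (fun n : ℕ => z.2 + ((n : ℝ) + 1)⁻¹) atTop (𝓝[≠] z.2) := by
      rw [tendsto_nhdsWithin_iff]
      constructor
      · have : Tendsto (fun n : ℕ => ((n : ℝ) + 1)⁻¹) atTop (𝓝 0) := by
          simpa using tendsto_one_div_add_atTop_nhds_zero_nat (𝕜 := ℝ)
        simpa using tendsto_const_nhds.add this
      · refine Eventually.of_forall fun n => ?_
        have : (0 : ℝ) < ((n : ℝ) + 1)⁻¹ := by positivity
        simp only [mem_compl_iff, mem_singleton_iff]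
        intro hcon
        nlinarith [hcon]
    have := h.comp hu
    refine this.congr fun n => ?_
    have hne : ((n : ℝ) + 1) ≠ 0 := by positivity
    simp only [Function.comp_apply, slope_def_field]
    field_simp
    ring
  exact measurable_of_tendsto_metrizable
    (fun n => ((hm.comp (measurable_fst.prodMk (measurable_snd.add_const _))).sub hm).mul_const _)
    (tendsto_pi_nhds.mpr key)

lemma measurable_D1 (p : ℝ × ℝ → ℝ) (hm : Measurable p)
    (hd1 : ∀ y, Differentiable ℝ (fun x => p (x, y))) : Measurable (D1 p) := by
  have h := measurable_D2 (fun z : ℝ × ℝ => p (z.2, z.1))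
    (hm.comp (measurable_snd.prodMk measurable_fst)) (fun x => hd1 x)
  have he : D1 p = fun z : ℝ × ℝ => D2 (fun z : ℝ × ℝ => p (z.2, z.1)) (z.2, z.1) := rfl
  rw [he]
  exact h.comp (measurable_snd.prodMk measurable_fst)

lemma deriv_eq_zero_of_nonneg {f : ℝ → ℝ} (hnn : ∀ x, 0 ≤ f x) {x : ℝ} (hx : f x = 0) :
    deriv f x = 0 := by
  have : IsLocalMin f x := Eventually.of_forall fun y => hx ▸ hnn y
  exact this.deriv_eq_zero

lemma mp_sub : MeasurePreserving (fun q : ℝ × ℝ => (q.1, q.2 - q.1)) volume volume := by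
  rw [Measure.volume_eq_prod]
  exact measurePreserving_prod_sub volume volume

lemma mp_sub_swap : MeasurePreserving (fun q : ℝ × ℝ => (q.2, q.1 - q.2)) volume volume := by
  rw [Measure.volume_eq_prod]
  exact measurePreserving_prod_sub_swap volume volume

lemma mp_swap : MeasurePreserving (fun q : ℝ × ℝ => (q.2, q.1)) volume volume := by
  rw [Measure.volume_eq_prod]
  exact Measure.measurePreserving_swap

/-- the shear `(x, y) ↦ (x + y, x)` as a measurable equivalence -/
noncomputable def shearE : (ℝ × ℝ) ≃ᵐ (ℝ × ℝ) where
  toFun z := (z.1 + z.2, z.1)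
  invFun q := (q.2, q.1 - q.2)
  left_inv z := by simp
  right_inv q := by simp
  measurable_toFun := ((measurable_fst.add measurable_snd).prodMk measurable_fst)
  measurable_invFun := (measurable_snd.prodMk (measurable_fst.sub measurable_snd))

lemma mp_shearE : MeasurePreserving (⇑shearE) volume volume := by
  have h : ⇑shearE = (fun q : ℝ × ℝ => (q.2, q.1)) ∘ (fun z : ℝ × ℝ => (z.1, z.1 + z.2)) := rfl
  rw [h]
  refine mp_swap.comp ?_
  rw [Measure.volume_eq_prod]
  exact measurePreserving_prod_add volume volume

lemma comp_sub_swap_integrable {f : ℝ × ℝ → ℝ} (hf : Integrable f) :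
    Integrable (fun q : ℝ × ℝ => f (q.2, q.1 - q.2)) := by
  have := (mp_sub_swap.integrable_comp hf.aestronglyMeasurable).mpr hf
  simpa [Function.comp_def] using this

lemma comp_sub_integrable {f : ℝ × ℝ → ℝ} (hf : Integrable f) :
    Integrable (fun q : ℝ × ℝ => f (q.1, q.2 - q.1)) := by
  have := (mp_sub.integrable_comp hf.aestronglyMeasurable).mpr hf
  simpa [Function.comp_def] using this

lemma comp_swap_integrable {f : ℝ × ℝ → ℝ} (hf : Integrable f) :
    Integrable (fun q : ℝ × ℝ => f (q.2, q.1)) := by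
  have := (mp_swap.integrable_comp hf.aestronglyMeasurable).mpr hf
  simpa [Function.comp_def] using this

lemma S2gen (p : ℝ × ℝ → ℝ) (hpi : Integrable p)
    (hd2 : ∀ x, Differentiable ℝ fun y => p (x, y))
    (hD2i : Integrable (D2 p)) (hdW : Differentiable ℝ (sumDensity p)) :
    ∀ᵐ w : ℝ, (∫ x, D2 p (x, w - x)) = deriv (sumDensity p) w := by
  set G : ℝ → ℝ := fun w => ∫ x, D2 p (x, w - x) with hGdef
  have hF' : Integrable (fun q : ℝ × ℝ => p (q.2, q.1 - q.2)) := comp_sub_swap_integrable hpi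
  have hFslice : ∀ᵐ w : ℝ, Integrable (fun x => p (x, w - x)) := by
    rw [Measure.volume_eq_prod] at hF'
    exact hF'.prod_right_ae
  have hG2' : Integrable (fun q : ℝ × ℝ => D2 p (q.2, q.1 - q.2)) := comp_sub_swap_integrable hD2i
  have hD2slice_x : ∀ᵐ x : ℝ, Integrable (fun y => D2 p (x, y)) := by
    have h := hD2i
    rw [Measure.volume_eq_prod] at h
    exact h.prod_right_ae
  have hGint : Integrable G := by
    rw [Measure.volume_eq_prod] at hG2'
    exact hG2'.integral_prod_left
  obtain ⟨w0, hw0⟩ : ∃ w0 : ℝ, Integrable (fun x => p (x, w0 - x)) := hFslice.exists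
  have hseg : ∀ w : ℝ, ∀ᵐ x : ℝ, p (x, w - x) - p (x, w0 - x) = ∫ u in w0..w, D2 p (x, u - x) := by
    intro w
    filter_upwards [hD2slice_x] with x hx
    have hftc : ∫ y in (w0 - x)..(w - x), D2 p (x, y) = p (x, w - x) - p (x, w0 - x) := by
      exact intervalIntegral.integral_eq_sub_of_hasDerivAt (f := fun y => p (x, y))
        (fun t _ => ((hd2 x) t).hasDerivAt) hx.intervalIntegrable
    have hsubst : (∫ u in w0..w, D2 p (x, u - x)) = ∫ y in (w0 - x)..(w - x), D2 p (x, y) := by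
      simpa using intervalIntegral.integral_comp_sub_right (a := w0) (b := w)
        (fun y => D2 p (x, y)) x
    rw [hsubst, hftc]
  have key : ∀ s t : ℝ, s ≤ t →
      (∫ x, ∫ u in s..t, D2 p (x, u - x)) = ∫ u in s..t, G u := by
    intro s t hst
    have h0 : Integrable (fun q : ℝ × ℝ => D2 p (q.1, q.2 - q.1)) := comp_sub_integrable hD2i
    rw [Measure.volume_eq_prod] at h0
    have hrest : Integrable (fun q : ℝ × ℝ => D2 p (q.1, q.2 - q.1))
        (volume.prod (volume.restrict (Ioc s t))) := by
      have heq : (volume : Measure ℝ).prod (volume.restrict (Ioc s t))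
          = ((volume : Measure ℝ).prod volume).restrict (univ ×ˢ Ioc s t) := by
        rw [← Measure.prod_restrict, Measure.restrict_univ]
      rw [heq]
      exact h0.restrict
    calc (∫ x, ∫ u in s..t, D2 p (x, u - x))
        = ∫ x, ∫ u in Ioc s t, D2 p (x, u - x) := by
          refine integral_congr_ae (Eventually.of_forall fun x => ?_)
          show (∫ u in s..t, D2 p (x, u - x)) = ∫ u in Ioc s t, D2 p (x, u - x)
          rw [intervalIntegral.integral_of_le hst]
      _ = ∫ u in Ioc s t, ∫ x, D2 p (x, u - x) :=
          integral_integral_swap (f := fun x u => D2 p (x, u - x)) hrest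
      _ = ∫ u in s..t, G u := by rw [intervalIntegral.integral_of_le hst]
  have hswap : ∀ w : ℝ, (∫ x, ∫ u in w0..w, D2 p (x, u - x)) = ∫ u in w0..w, G u := by
    intro w
    rcases le_total w0 w with h | h
    · exact key w0 w h
    · have hk := key w w0 h
      calc (∫ x, ∫ u in w0..w, D2 p (x, u - x))
          = ∫ x, -(∫ u in w..w0, D2 p (x, u - x)) := by
            refine integral_congr_ae (Eventually.of_forall fun x => ?_)
            show (∫ u in w0..w, D2 p (x, u - x)) = -∫ u in w..w0, D2 p (x, u - x)
            rw [intervalIntegral.integral_symm]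
        _ = -(∫ x, ∫ u in w..w0, D2 p (x, u - x)) := integral_neg _
        _ = -(∫ u in w..w0, G u) := by rw [hk]
        _ = ∫ u in w0..w, G u := (intervalIntegral.integral_symm w w0).symm
  have hAae : (fun w => sumDensity p w - sumDensity p w0) =ᵐ[volume]
      (fun w => ∫ u in w0..w, G u) := by
    filter_upwards [hFslice] with w hw
    have h1 : sumDensity p w - sumDensity p w0 = ∫ x, (p (x, w - x) - p (x, w0 - x)) :=
      (integral_sub hw hw0).symm
    rw [h1, integral_congr_ae (hseg w), hswap w]
  have hAall : ∀ w, sumDensity p w - sumDensity p w0 = ∫ u in w0..w, G u := by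
    have hc1 : Continuous fun w => sumDensity p w - sumDensity p w0 :=
      hdW.continuous.sub continuous_const
    have hc2 : Continuous fun w => ∫ u in w0..w, G u := hGint.continuous_primitive w0
    have := (Continuous.ae_eq_iff_eq volume hc1 hc2).mp hAae
    exact fun w => congrFun this w
  have hGloc : LocallyIntegrable G volume := hGint.locallyIntegrable
  filter_upwards [IsUnifLocDoublingMeasure.ae_tendsto_average volume hGloc 1] with w hw
  have havg : Tendsto (fun δ : ℝ => ⨍ y in Metric.closedBall w δ, G y) (𝓝[>] 0) (𝓝 (G w)) := by
    refine hw (fun _ => w) id tendsto_id ?_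
    filter_upwards [self_mem_nhdsWithin] with δ (hδ : (0:ℝ) < δ)
    simp only [Metric.mem_closedBall, dist_self, id, one_mul]
    linarith
  have hform : ∀ᶠ δ in 𝓝[>] (0:ℝ), ⨍ y in Metric.closedBall w δ, G y
      = (sumDensity p (w + δ) - sumDensity p (w - δ)) / (2 * δ) := by
    filter_upwards [self_mem_nhdsWithin] with δ (hδ : (0:ℝ) < δ)
    have hvol : (volume (Metric.closedBall w δ)).toReal = 2 * δ := by
      rw [Real.volume_closedBall, ENNReal.toReal_ofReal (by linarith)]
    have hint' : ∫ y in Metric.closedBall w δ, G y = ∫ u in (w - δ)..(w + δ), G u := by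
      rw [Real.closedBall_eq_Icc, integral_Icc_eq_integral_Ioc,
        ← intervalIntegral.integral_of_le (by linarith)]
    have hval : ∫ u in (w - δ)..(w + δ), G u
        = sumDensity p (w + δ) - sumDensity p (w - δ) := by
      have hsplit : ((∫ u in w0..(w + δ), G u) - ∫ u in w0..(w - δ), G u)
          = ∫ u in (w - δ)..(w + δ), G u :=
        intervalIntegral.integral_interval_sub_left hGint.intervalIntegrable
          hGint.intervalIntegrable
      rw [← hsplit, ← hAall (w + δ), ← hAall (w - δ)]
      ring
    rw [setAverage_eq, hint', hval, measureReal_def, hvol, smul_eq_mul]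
    field_simp
  have hder : HasDerivAt (sumDensity p) (deriv (sumDensity p) w) w := (hdW w).hasDerivAt
  have hslope := hasDerivAt_iff_tendsto_slope.mp hder
  have hid0 : Tendsto (fun δ : ℝ => δ) (𝓝[>] (0:ℝ)) (𝓝 0) :=
    tendsto_id.mono_right nhdsWithin_le_nhds
  have hplus : Tendsto (fun δ : ℝ => w + δ) (𝓝[>] 0) (𝓝[≠] w) := by
    rw [tendsto_nhdsWithin_iff]
    constructor
    · simpa using tendsto_const_nhds.add hid0
    · filter_upwards [self_mem_nhdsWithin] with δ (hδ : (0:ℝ) < δ)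
      simp only [mem_compl_iff, mem_singleton_iff]
      intro hcon; nlinarith [hcon]
  have hminus : Tendsto (fun δ : ℝ => w - δ) (𝓝[>] 0) (𝓝[≠] w) := by
    rw [tendsto_nhdsWithin_iff]
    constructor
    · simpa using tendsto_const_nhds.sub hid0
    · filter_upwards [self_mem_nhdsWithin] with δ (hδ : (0:ℝ) < δ)
      simp only [mem_compl_iff, mem_singleton_iff]
      intro hcon; nlinarith [hcon]
  have t1 := hslope.comp hplus
  have t2 := hslope.comp hminus
  have tavg : Tendsto (fun δ : ℝ => (sumDensity p (w + δ) - sumDensity p (w - δ)) / (2 * δ))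
      (𝓝[>] 0) (𝓝 (deriv (sumDensity p) w)) := by
    have tsum := (t1.add t2).div_const 2
    have hlim : (deriv (sumDensity p) w + deriv (sumDensity p) w) / 2
        = deriv (sumDensity p) w := by ring
    rw [hlim] at tsum
    refine Tendsto.congr' ?_ tsum
    filter_upwards [self_mem_nhdsWithin] with δ (hδ : (0:ℝ) < δ)
    have hδ' : δ ≠ 0 := ne_of_gt hδ
    simp only [Function.comp_apply, slope_def_field]
    have e1 : w + δ - w = δ := by ring
    have e2 : w - δ - w = -δ := by ring
    rw [e1, e2, div_neg, ← sub_eq_add_neg, ← sub_div, sub_sub_sub_cancel_right, div_div,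
      mul_comm δ 2]
  exact tendsto_nhds_unique (Tendsto.congr' hform havg) tavg

end Aux
section Aux2

open Set Filter Topology

lemma D1_eq_score (p : ℝ × ℝ → ℝ) (hnn : ∀ z, 0 ≤ p z) (z : ℝ × ℝ) :
    D1 p z = p z * score1 p z := by
  by_cases h : p z = 0
  · have hmin : deriv (fun x => p (x, z.2)) z.1 = 0 := by
      refine deriv_eq_zero_of_nonneg (fun x => hnn (x, z.2)) ?_
      exact h
    simp [D1, score1, hmin, h]
  · rw [D1, score1]
    field_simp

lemma D2_eq_score (p : ℝ × ℝ → ℝ) (hnn : ∀ z, 0 ≤ p z) (z : ℝ × ℝ) :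
    D2 p z = p z * score2 p z := by
  by_cases h : p z = 0
  · have hmin : deriv (fun y => p (z.1, y)) z.2 = 0 := by
      refine deriv_eq_zero_of_nonneg (fun y => hnn (z.1, y)) ?_
      exact h
    simp [D2, score2, hmin, h]
  · rw [D2, score2]
    field_simp

lemma derivW_eq_score (p : ℝ × ℝ → ℝ) (hnn : ∀ z, 0 ≤ p z) (w : ℝ) :
    deriv (sumDensity p) w = sumDensity p w * scoreW p w := by
  have hnnW : ∀ v, 0 ≤ sumDensity p v := fun v => integral_nonneg (fun x => hnn _)
  by_cases h : sumDensity p w = 0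
  · rw [scoreW, deriv_eq_zero_of_nonneg hnnW h]
    simp
  · rw [scoreW]
    field_simp

lemma integrable_D2' (p : ℝ × ℝ → ℝ) (hnn : ∀ z, 0 ≤ p z) (hmD2 : Measurable (D2 p))
    (hpi : Integrable p) (hJ : Integrable (fun z => p z * (score2 p z) ^ 2)) :
    Integrable (D2 p) := by
  refine Integrable.mono' ((hpi.add hJ).div_const 2) hmD2.aestronglyMeasurable
    (Eventually.of_forall fun z => ?_)
  rw [D2_eq_score p hnn z, Real.norm_eq_abs, abs_mul, abs_of_nonneg (hnn z)]
  have h0 := hnn z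
  show p z * |score2 p z| ≤ (p z + p z * score2 p z ^ 2) / 2
  nlinarith [mul_nonneg h0 (sq_nonneg (|score2 p z| - 1)), sq_abs (score2 p z),
    abs_nonneg (score2 p z)]

lemma integrable_D1' (p : ℝ × ℝ → ℝ) (hnn : ∀ z, 0 ≤ p z) (hmD1 : Measurable (D1 p))
    (hpi : Integrable p) (hJ : Integrable (fun z => p z * (score1 p z) ^ 2)) :
    Integrable (D1 p) := by
  refine Integrable.mono' ((hpi.add hJ).div_const 2) hmD1.aestronglyMeasurable
    (Eventually.of_forall fun z => ?_)
  rw [D1_eq_score p hnn z, Real.norm_eq_abs, abs_mul, abs_of_nonneg (hnn z)]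
  have h0 := hnn z
  show p z * |score1 p z| ≤ (p z + p z * score1 p z ^ 2) / 2
  nlinarith [mul_nonneg h0 (sq_nonneg (|score1 p z| - 1)), sq_abs (score1 p z),
    abs_nonneg (score1 p z)]

end Aux2

open Set Filter Topology in
/-- For `(X,Y)` with a differentiable joint density (finite `J_XX`, `J_YY`, `J_XY`) whose
sum `W = X+Y` has a differentiable density with finite Fisher information, for all reals
`a`, `b` one has `(a+b)² J(X+Y) ≤ a² J_XX + 2ab J_XY + b² J_YY`; this follows from the
identity `E[(a ρ⁽¹⁾ + b ρ⁽²⁾ − (a+b) ρ_W(X+Y))²] = a² J_XX + 2ab J_XY + b² J_YY − (a+b)² J(X+Y) ≥ 0`. -/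
theorem quadratic_fisher_bound
    (p : ℝ × ℝ → ℝ) (hp : IsJointDensity p)
    (hd1 : ∀ y, Differentiable ℝ (fun x => p (x, y)))
    (hd2 : ∀ x, Differentiable ℝ (fun y => p (x, y)))
    (hJxx : Integrable (fun z => p z * (score1 p z) ^ 2))
    (hJyy : Integrable (fun z => p z * (score2 p z) ^ 2))
    (hJxy : Integrable (fun z => p z * (score1 p z * score2 p z)))
    (hdW : Differentiable ℝ (sumDensity p))
    (hJW : Integrable (fun w => sumDensity p w * (scoreW p w) ^ 2))
    (a b : ℝ) :
    (a + b) ^ 2 * Jsum p ≤ a ^ 2 * Jxx p + 2 * a * b * Jxy p + b ^ 2 * Jyy p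
      ∧ (∫ z : ℝ × ℝ,
            p z * (a * score1 p z + b * score2 p z - (a + b) * scoreW p (z.1 + z.2)) ^ 2)
          = a ^ 2 * Jxx p + 2 * a * b * Jxy p + b ^ 2 * Jyy p - (a + b) ^ 2 * Jsum p := by
  obtain ⟨hm, hnn, hone⟩ := hp
  have hpi : Integrable p := by
    by_contra h
    rw [integral_undef h] at hone
    exact one_ne_zero hone.symm
  have hmD1 : Measurable (D1 p) := measurable_D1 p hm hd1
  have hmD2 : Measurable (D2 p) := measurable_D2 p hm hd2
  have h1eq : ∀ z, D1 p z = p z * score1 p z := D1_eq_score p hnn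
  have h2eq : ∀ z, D2 p z = p z * score2 p z := D2_eq_score p hnn
  have hWeq : ∀ w, deriv (sumDensity p) w = sumDensity p w * scoreW p w := derivW_eq_score p hnn
  have hD1i : Integrable (D1 p) := integrable_D1' p hnn hmD1 hpi hJxx
  have hD2i : Integrable (D2 p) := integrable_D2' p hnn hmD2 hpi hJyy
  have hmW : Measurable (scoreW p) := by
    have : Measurable (deriv (sumDensity p)) := measurable_deriv _
    exact this.div hdW.continuous.measurable
  -- a.e. identities for the inner integrals
  have hS2 : ∀ᵐ w : ℝ, (∫ x, D2 p (x, w - x)) = deriv (sumDensity p) w :=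
    S2gen p hpi hd2 hD2i hdW
  have hS1 : ∀ᵐ w : ℝ, (∫ x, D1 p (x, w - x)) = deriv (sumDensity p) w := by
    have hsum_eq : sumDensity (fun z : ℝ × ℝ => p (z.2, z.1)) = sumDensity p := by
      funext w
      show (∫ x, p (w - x, x)) = ∫ x, p (x, w - x)
      have h := integral_sub_left_eq_self (μ := volume) (fun t : ℝ => p (t, w - t)) w
      simpa using h
    have hqi : Integrable (fun z : ℝ × ℝ => p (z.2, z.1)) := comp_swap_integrable hpi
    have hqD2i : Integrable (D2 (fun z : ℝ × ℝ => p (z.2, z.1))) := by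
      have he : D2 (fun z : ℝ × ℝ => p (z.2, z.1)) = fun z : ℝ × ℝ => D1 p (z.2, z.1) := rfl
      rw [he]
      exact comp_swap_integrable hD1i
    have hqdW : Differentiable ℝ (sumDensity (fun z : ℝ × ℝ => p (z.2, z.1))) :=
      hsum_eq ▸ hdW
    have hkey := S2gen (fun z : ℝ × ℝ => p (z.2, z.1)) hqi (fun x => hd1 x) hqD2i hqdW
    rw [hsum_eq] at hkey
    filter_upwards [hkey] with w hw
    rw [← hw]
    show (∫ x, D1 p (x, w - x)) = ∫ y, D1 p (w - y, y)
    have h := integral_sub_left_eq_self (μ := volume) (fun t : ℝ => D1 p (t, w - t)) w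
    simpa using h.symm
  -- slice integrability facts
  have hFslice : ∀ᵐ w : ℝ, Integrable (fun x => p (x, w - x)) := by
    have hF' := comp_sub_swap_integrable hpi
    rw [Measure.volume_eq_prod] at hF'
    exact hF'.prod_right_ae
  have hD1slice : ∀ᵐ w : ℝ, Integrable (fun x => D1 p (x, w - x)) := by
    have h := comp_sub_swap_integrable hD1i
    rw [Measure.volume_eq_prod] at h
    exact h.prod_right_ae
  have hD2slice : ∀ᵐ w : ℝ, Integrable (fun x => D2 p (x, w - x)) := by
    have h := comp_sub_swap_integrable hD2i
    rw [Measure.volume_eq_prod] at h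
    exact h.prod_right_ae
  -- the transported square term
  have hψm : AEStronglyMeasurable (fun q : ℝ × ℝ => p (q.2, q.1 - q.2) * scoreW p q.1 ^ 2)
      volume :=
    ((hm.comp (measurable_snd.prodMk (measurable_fst.sub measurable_snd))).mul
      ((hmW.comp measurable_fst).pow_const 2)).aestronglyMeasurable
  have hnormeq : (fun w : ℝ => ∫ x, ‖p (x, w - x) * scoreW p w ^ 2‖)
      = fun w => sumDensity p w * scoreW p w ^ 2 := by
    funext w
    have hptw : ∀ x : ℝ, ‖p (x, w - x) * scoreW p w ^ 2‖ = p (x, w - x) * scoreW p w ^ 2 :=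
      fun x => norm_of_nonneg (mul_nonneg (hnn _) (sq_nonneg _))
    calc (∫ x, ‖p (x, w - x) * scoreW p w ^ 2‖)
        = ∫ x, p (x, w - x) * scoreW p w ^ 2 :=
          integral_congr_ae (Eventually.of_forall hptw)
      _ = (∫ x, p (x, w - x)) * scoreW p w ^ 2 := integral_mul_const _ _
      _ = sumDensity p w * scoreW p w ^ 2 := rfl
  have hψi : Integrable (fun q : ℝ × ℝ => p (q.2, q.1 - q.2) * scoreW p q.1 ^ 2) := by
    rw [Measure.volume_eq_prod]
    rw [Measure.volume_eq_prod] at hψm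
    refine (integrable_prod_iff hψm).mpr ⟨?_, ?_⟩
    · filter_upwards [hFslice] with w hw
      exact hw.mul_const _
    · show Integrable (fun w : ℝ => ∫ x, ‖p (x, w - x) * scoreW p w ^ 2‖)
      rw [hnormeq]
      exact hJW
  have hBe : (fun z : ℝ × ℝ => p z * scoreW p (z.1 + z.2) ^ 2)
      = (fun q : ℝ × ℝ => p (q.2, q.1 - q.2) * scoreW p q.1 ^ 2) ∘ ⇑shearE := by
    funext z
    show p z * scoreW p (z.1 + z.2) ^ 2
        = p ((z.1 + z.2, z.1).2, (z.1 + z.2, z.1).1 - (z.1 + z.2, z.1).2)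
          * scoreW p (z.1 + z.2, z.1).1 ^ 2
    simp
  have hPB2 : Integrable (fun z : ℝ × ℝ => p z * scoreW p (z.1 + z.2) ^ 2) := by
    rw [hBe]
    exact (mp_shearE.integrable_comp hψm).mpr hψi
  have hIB2 : (∫ z : ℝ × ℝ, p z * scoreW p (z.1 + z.2) ^ 2) = Jsum p := by
    have hcompB := mp_shearE.integral_comp shearE.measurableEmbedding
      (fun q : ℝ × ℝ => p (q.2, q.1 - q.2) * scoreW p q.1 ^ 2)
    have h1 : (∫ z : ℝ × ℝ, p z * scoreW p (z.1 + z.2) ^ 2)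
        = ∫ z : ℝ × ℝ, (fun q : ℝ × ℝ => p (q.2, q.1 - q.2) * scoreW p q.1 ^ 2) (shearE z) :=
      integral_congr_ae (Eventually.of_forall fun z => by
        simp [shearE, MeasurableEquiv.coe_mk])
    rw [h1, hcompB]
    rw [Measure.volume_eq_prod] at hψi ⊢
    rw [integral_prod _ hψi]
    refine integral_congr_ae (Eventually.of_forall fun w => ?_)
    show (∫ x, p (x, w - x) * scoreW p w ^ 2) = sumDensity p w * scoreW p w ^ 2
    rw [integral_mul_const]
    rfl
  -- the cross term
  have hCm : AEStronglyMeasurable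
      (fun z : ℝ × ℝ => (a * D1 p z + b * D2 p z) * scoreW p (z.1 + z.2)) volume :=
    (((hmD1.const_mul a).add (hmD2.const_mul b)).mul
      (hmW.comp (measurable_fst.add measurable_snd))).aestronglyMeasurable
  have hPA2 : Integrable (fun z => p z * (a * score1 p z + b * score2 p z) ^ 2) := by
    have he : (fun z => p z * (a * score1 p z + b * score2 p z) ^ 2)
        = fun z => a ^ 2 * (p z * score1 p z ^ 2) + 2 * a * b * (p z * (score1 p z * score2 p z))
          + b ^ 2 * (p z * score2 p z ^ 2) := by
      funext z; ring
    rw [he]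
    exact ((hJxx.const_mul _).add (hJxy.const_mul _)).add (hJyy.const_mul _)
  have hIA2 : (∫ z, p z * (a * score1 p z + b * score2 p z) ^ 2)
      = a ^ 2 * Jxx p + 2 * a * b * Jxy p + b ^ 2 * Jyy p := by
    have he : (fun z : ℝ × ℝ => p z * (a * score1 p z + b * score2 p z) ^ 2)
        = fun z => a ^ 2 * (p z * score1 p z ^ 2) + 2 * a * b * (p z * (score1 p z * score2 p z))
          + b ^ 2 * (p z * score2 p z ^ 2) := by
      funext z; ring
    have iA : Integrable (fun z : ℝ × ℝ => a ^ 2 * (p z * score1 p z ^ 2)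
        + 2 * a * b * (p z * (score1 p z * score2 p z))) := by
      exact (hJxx.const_mul _).add (hJxy.const_mul _)
    have iB : Integrable (fun z : ℝ × ℝ => b ^ 2 * (p z * score2 p z ^ 2)) := hJyy.const_mul _
    have iA1 : Integrable (fun z : ℝ × ℝ => a ^ 2 * (p z * score1 p z ^ 2)) := hJxx.const_mul _
    have iA2 : Integrable (fun z : ℝ × ℝ =>
        2 * a * b * (p z * (score1 p z * score2 p z))) := hJxy.const_mul _
    rw [he, integral_add iA iB, integral_add iA1 iA2, integral_const_mul,
      integral_const_mul, integral_const_mul]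
    rfl
  have hCi : Integrable (fun z : ℝ × ℝ => (a * D1 p z + b * D2 p z) * scoreW p (z.1 + z.2)) := by
    refine Integrable.mono' ((hPA2.add hPB2).div_const 2) hCm (Eventually.of_forall fun z => ?_)
    rw [h1eq z, h2eq z, Real.norm_eq_abs]
    have hfact : a * (p z * score1 p z) + b * (p z * score2 p z)
        = p z * (a * score1 p z + b * score2 p z) := by ring
    rw [hfact]
    show |p z * (a * score1 p z + b * score2 p z) * scoreW p (z.1 + z.2)|
        ≤ (p z * (a * score1 p z + b * score2 p z) ^ 2 + p z * scoreW p (z.1 + z.2) ^ 2) / 2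
    rw [abs_le]
    constructor
    · nlinarith [mul_nonneg (hnn z) (sq_nonneg (a * score1 p z + b * score2 p z
        + scoreW p (z.1 + z.2)))]
    · nlinarith [mul_nonneg (hnn z) (sq_nonneg (a * score1 p z + b * score2 p z
        - scoreW p (z.1 + z.2)))]
  have hψ2m : AEStronglyMeasurable (fun q : ℝ × ℝ =>
      (a * D1 p (q.2, q.1 - q.2) + b * D2 p (q.2, q.1 - q.2)) * scoreW p q.1) volume := by
    have hsw : Measurable fun q : ℝ × ℝ => (q.2, q.1 - q.2) :=
      measurable_snd.prodMk (measurable_fst.sub measurable_snd)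
    exact ((((hmD1.comp hsw).const_mul a).add ((hmD2.comp hsw).const_mul b)).mul
      (hmW.comp measurable_fst)).aestronglyMeasurable
  have hCe : (fun z : ℝ × ℝ => (a * D1 p z + b * D2 p z) * scoreW p (z.1 + z.2))
      = (fun q : ℝ × ℝ =>
        (a * D1 p (q.2, q.1 - q.2) + b * D2 p (q.2, q.1 - q.2)) * scoreW p q.1) ∘ ⇑shearE := by
    funext z
    show (a * D1 p z + b * D2 p z) * scoreW p (z.1 + z.2)
        = (a * D1 p ((z.1 + z.2, z.1).2, (z.1 + z.2, z.1).1 - (z.1 + z.2, z.1).2)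
          + b * D2 p ((z.1 + z.2, z.1).2, (z.1 + z.2, z.1).1 - (z.1 + z.2, z.1).2))
          * scoreW p (z.1 + z.2, z.1).1
    simp
  have hψ2i : Integrable (fun q : ℝ × ℝ =>
      (a * D1 p (q.2, q.1 - q.2) + b * D2 p (q.2, q.1 - q.2)) * scoreW p q.1) := by
    refine (mp_shearE.integrable_comp hψ2m).mp ?_
    rw [← hCe]
    exact hCi
  have hCval : (∫ z : ℝ × ℝ, (a * D1 p z + b * D2 p z) * scoreW p (z.1 + z.2))
      = (a + b) * Jsum p := by
    have hcompC := mp_shearE.integral_comp shearE.measurableEmbedding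
      (fun q : ℝ × ℝ => (a * D1 p (q.2, q.1 - q.2) + b * D2 p (q.2, q.1 - q.2)) * scoreW p q.1)
    have h1 : (∫ z : ℝ × ℝ, (a * D1 p z + b * D2 p z) * scoreW p (z.1 + z.2))
        = ∫ z : ℝ × ℝ, (fun q : ℝ × ℝ =>
            (a * D1 p (q.2, q.1 - q.2) + b * D2 p (q.2, q.1 - q.2)) * scoreW p q.1)
          (shearE z) :=
      integral_congr_ae (Eventually.of_forall fun z => by
        simp [shearE, MeasurableEquiv.coe_mk])
    rw [h1, hcompC]
    rw [Measure.volume_eq_prod] at hψ2i ⊢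
    rw [integral_prod _ hψ2i]
    have hinner : ∀ᵐ w : ℝ, (∫ x, (a * D1 p (x, w - x) + b * D2 p (x, w - x)) * scoreW p w)
        = (a + b) * (sumDensity p w * scoreW p w ^ 2) := by
      filter_upwards [hS1, hS2, hD1slice, hD2slice] with w e1 e2 i1 i2
      rw [integral_mul_const, integral_add (i1.const_mul a) (i2.const_mul b),
        integral_const_mul, integral_const_mul, e1, e2, hWeq w]
      ring
    rw [integral_congr_ae hinner, integral_const_mul]
    rfl
  -- expansion of the square
  have hexp : ∀ z : ℝ × ℝ,
      p z * (a * score1 p z + b * score2 p z - (a + b) * scoreW p (z.1 + z.2)) ^ 2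
      = p z * (a * score1 p z + b * score2 p z) ^ 2
        - 2 * (a + b) * ((a * D1 p z + b * D2 p z) * scoreW p (z.1 + z.2))
        + (a + b) ^ 2 * (p z * scoreW p (z.1 + z.2) ^ 2) := by
    intro z
    rw [h1eq z, h2eq z]
    ring
  have hIeq : (∫ z : ℝ × ℝ,
        p z * (a * score1 p z + b * score2 p z - (a + b) * scoreW p (z.1 + z.2)) ^ 2)
      = a ^ 2 * Jxx p + 2 * a * b * Jxy p + b ^ 2 * Jyy p - (a + b) ^ 2 * Jsum p := by
    have iC : Integrable (fun z : ℝ × ℝ =>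
        2 * (a + b) * ((a * D1 p z + b * D2 p z) * scoreW p (z.1 + z.2))) := hCi.const_mul _
    have iS : Integrable (fun z : ℝ × ℝ =>
        p z * (a * score1 p z + b * score2 p z) ^ 2
          - 2 * (a + b) * ((a * D1 p z + b * D2 p z) * scoreW p (z.1 + z.2))) := by
      exact hPA2.sub iC
    have iT : Integrable (fun z : ℝ × ℝ =>
        (a + b) ^ 2 * (p z * scoreW p (z.1 + z.2) ^ 2)) := hPB2.const_mul _
    rw [integral_congr_ae (Eventually.of_forall hexp), integral_add iS iT,
      integral_sub hPA2 iC, integral_const_mul, integral_const_mul,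
      hIA2, hCval, hIB2]
    ring
  refine ⟨?_, hIeq⟩
  have hnonneg : 0 ≤ ∫ z : ℝ × ℝ,
      p z * (a * score1 p z + b * score2 p z - (a + b) * scoreW p (z.1 + z.2)) ^ 2 :=
    integral_nonneg fun z => mul_nonneg (hnn z) (sq_nonneg _)
  rw [hIeq] at hnonneg
  linarith
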